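/- Fix λ > 0, a positive integer d, let f_d(x) = λ/(1+x)^d, and define Ξ(d,x) = (d·x/(1+x))·(f_d(x)/(1+f_d(x))) and ξ(d) = sup_{x ≥ 0} Ξ(d,x). Then for any vectors x, y ∈ (arcsinh∘√)((0,∞))^d (i.e., in the image of the message φ(t) = arcsinh(√t)), writing f_d^φ for the conjugated recurrence, one has |f_d^φ(x) - f_d^φ(y)|² ≤ ξ(d)·∑ᵢ (xᵢ - yᵢ)². -/

import Mathlib

open Real Finset

lemma scalar_alg (u A : ℝ) (hu : 0 < u) :
    -(Real.sqrt (u / (1 + u)) * A)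
      = (Real.sqrt (1 + Real.sqrt u ^ 2))⁻¹ • (-(2 * u * A) / (2 * Real.sqrt u)) := by
  have h1u : (0:ℝ) < 1 + u := by linarith
  have hsu : (0:ℝ) < Real.sqrt u := Real.sqrt_pos.2 hu
  have hmul : Real.sqrt u * Real.sqrt u = u := Real.mul_self_sqrt hu.le
  rw [Real.sq_sqrt hu.le, smul_eq_mul, Real.sqrt_div hu.le]
  have key : -(2 * u * A) / (2 * Real.sqrt u) = -(Real.sqrt u * A) := by
    rw [div_eq_iff (by positivity)]
    linear_combination (2 * A) * hmul
  rw [key, div_eq_mul_inv]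
  ring

lemma deriv_aux (lam : ℝ) (hlam : 0 < lam) (d : ℕ) (a Δ : Fin d → ℝ) (t : ℝ) :
    HasDerivAt (fun s => Real.arsinh (Real.sqrt (lam * ∏ i, (1 + Real.sinh (a i + s * Δ i) ^ 2)⁻¹)))
      (-(Real.sqrt ((lam * ∏ i, (1 + Real.sinh (a i + t * Δ i) ^ 2)⁻¹) /
          (1 + lam * ∏ i, (1 + Real.sinh (a i + t * Δ i) ^ 2)⁻¹)) *
        ∑ i, Real.sinh (a i + t * Δ i) * Real.cosh (a i + t * Δ i) /
            (1 + Real.sinh (a i + t * Δ i) ^ 2) * Δ i)) t := by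
  have hg : ∀ i, (0:ℝ) < 1 + Real.sinh (a i + t * Δ i) ^ 2 := fun i => by positivity
  have hQpos : (0:ℝ) < ∏ i, (1 + Real.sinh (a i + t * Δ i) ^ 2)⁻¹ :=
    Finset.prod_pos fun i _ => inv_pos.2 (hg i)
  have hu : (0:ℝ) < lam * ∏ i, (1 + Real.sinh (a i + t * Δ i) ^ 2)⁻¹ := mul_pos hlam hQpos
  have hqi : ∀ i ∈ Finset.univ, HasDerivAt (fun s => (1 + Real.sinh (a i + s * Δ i) ^ 2)⁻¹)
      (-(↑2 * Real.sinh (a i + t * Δ i) ^ 1 * (Real.cosh (a i + t * Δ i) * Δ i)) /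
        (1 + Real.sinh (a i + t * Δ i) ^ 2) ^ 2) t := by
    intro i _
    have h1 : HasDerivAt (fun s : ℝ => a i + s * Δ i) (Δ i) t := by
      simpa using (hasDerivAt_mul_const (Δ i)).const_add (a i)
    exact ((h1.sinh.pow 2).const_add 1).inv (ne_of_gt (hg i))
  have hQd := HasDerivAt.fun_finsetProd hqi
  have hQd' : HasDerivAt (fun s => ∏ i, (1 + Real.sinh (a i + s * Δ i) ^ 2)⁻¹)
      (-(2 * (∏ i, (1 + Real.sinh (a i + t * Δ i) ^ 2)⁻¹) *
        ∑ i, Real.sinh (a i + t * Δ i) * Real.cosh (a i + t * Δ i) /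
            (1 + Real.sinh (a i + t * Δ i) ^ 2) * Δ i)) t := by
    refine hQd.congr_deriv ?_
    symm
    rw [Finset.mul_sum, ← Finset.sum_neg_distrib]
    refine Finset.sum_congr rfl fun i _ => ?_
    have hpe : (∏ j ∈ Finset.univ.erase i, (1 + Real.sinh (a j + t * Δ j) ^ 2)⁻¹) *
        (1 + Real.sinh (a i + t * Δ i) ^ 2)⁻¹
        = ∏ j, (1 + Real.sinh (a j + t * Δ j) ^ 2)⁻¹ :=
      Finset.prod_erase_mul _ _ (Finset.mem_univ i)
    have hpe' : (∏ j ∈ Finset.univ.erase i, (1 + Real.sinh (a j + t * Δ j) ^ 2)⁻¹)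
        = (∏ j, (1 + Real.sinh (a j + t * Δ j) ^ 2)⁻¹) * (1 + Real.sinh (a i + t * Δ i) ^ 2) := by
      have := congrArg (· * (1 + Real.sinh (a i + t * Δ i) ^ 2)) hpe
      simpa [mul_assoc, inv_mul_cancel₀ (hg i).ne'] using this
    rw [smul_eq_mul, hpe']
    have := (hg i).ne'
    field_simp
  have h9 := ((hQd'.const_mul lam).sqrt (ne_of_gt (by simpa using hu))).arsinh
  convert h9 using 1
  rw [scalar_alg (lam * ∏ i, (1 + Real.sinh (a i + t * Δ i) ^ 2)⁻¹)
    (∑ i, Real.sinh (a i + t * Δ i) * Real.cosh (a i + t * Δ i) /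
      (1 + Real.sinh (a i + t * Δ i) ^ 2) * Δ i) hu]
  congr 1
  congr 1
  ring


lemma xi_bdd (lam : ℝ) (hlam : 0 < lam) (d : ℕ) :
    BddAbove ((fun x => ((d : ℝ) * x / (1 + x)) * ((lam / (1 + x) ^ d) / (1 + lam / (1 + x) ^ d)))
      '' Set.Ici 0) := by
  refine ⟨d, fun v hv => ?_⟩
  obtain ⟨x, hx0, rfl⟩ := hv
  have hx0 : (0:ℝ) ≤ x := hx0
  have h1x : (0:ℝ) < 1 + x := by linarith
  have hf : (0:ℝ) < lam / (1 + x) ^ d := by positivity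
  have ha : (d : ℝ) * x / (1 + x) ≤ d := by
    rw [div_le_iff₀ h1x]
    have : (0:ℝ) ≤ (d:ℝ) := by positivity
    nlinarith
  have hb : (lam / (1 + x) ^ d) / (1 + lam / (1 + x) ^ d) ≤ 1 := by
    rw [div_le_one (by linarith)]; linarith
  have hb0 : (0:ℝ) ≤ (lam / (1 + x) ^ d) / (1 + lam / (1 + x) ^ d) := by positivity
  calc ((d : ℝ) * x / (1 + x)) * ((lam / (1 + x) ^ d) / (1 + lam / (1 + x) ^ d))
      ≤ (d : ℝ) * 1 := by
        apply mul_le_mul ha hb hb0 (by positivity)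
    _ = d := mul_one _

lemma xi_nonneg (lam : ℝ) (hlam : 0 < lam) (d : ℕ) :
    0 ≤ sSup ((fun x => ((d : ℝ) * x / (1 + x)) * ((lam / (1 + x) ^ d) / (1 + lam / (1 + x) ^ d)))
      '' Set.Ici 0) := by
  have h0 : (0:ℝ) ∈ (fun x => ((d : ℝ) * x / (1 + x)) * ((lam / (1 + x) ^ d) / (1 + lam / (1 + x) ^ d)))
      '' Set.Ici 0 := ⟨0, Set.self_mem_Ici, by norm_num⟩
  exact le_csSup (xi_bdd lam hlam d) h0

lemma lemA (lam : ℝ) (hlam : 0 < lam) (d : ℕ) (hd : 0 < d) (z : Fin d → ℝ) (hz : ∀ i, 0 ≤ z i) :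
    (lam * ∏ i, (1 + z i)⁻¹) / (1 + lam * ∏ i, (1 + z i)⁻¹) * ∑ i, z i / (1 + z i)
      ≤ sSup ((fun x => ((d : ℝ) * x / (1 + x)) * ((lam / (1 + x) ^ d) / (1 + lam / (1 + x) ^ d)))
        '' Set.Ici 0) := by
  have hg : ∀ i, (0:ℝ) < 1 + z i := fun i => by linarith [hz i]
  have hp : (0:ℝ) < ∏ i, (1 + z i) := Finset.prod_pos fun i _ => hg i
  have hp1 : (1:ℝ) ≤ ∏ i, (1 + z i) := by
    calc (1:ℝ) = ∏ _i : Fin d, 1 := by simp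
      _ ≤ ∏ i, (1 + z i) := Finset.prod_le_prod (by intros; norm_num)
          (fun i _ => by linarith [hz i])
  set p : ℝ := ∏ i, (1 + z i) with hpdef
  have hdR : (0:ℝ) < (d:ℝ) := by exact_mod_cast hd
  set r : ℝ := p ^ ((d:ℝ)⁻¹) with hrdef
  have hr1 : (1:ℝ) ≤ r := Real.one_le_rpow hp1 (by positivity)
  have hr0 : (0:ℝ) < r := by linarith
  have hrd : r ^ d = p := by
    rw [hrdef, ← Real.rpow_natCast (p ^ ((d:ℝ)⁻¹)) d, ← Real.rpow_mul hp.le,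
      inv_mul_cancel₀ hdR.ne', Real.rpow_one]
  set w : ℝ := r - 1 with hwdef
  have hw0 : (0:ℝ) ≤ w := by simp [hwdef]; linarith
  have h1w : (1:ℝ) + w = r := by ring
  -- the product term
  have hprod_inv : (∏ i, (1 + z i)⁻¹) = p⁻¹ := by
    rw [hpdef]; exact Finset.prod_inv_distrib _
  have hu_eq : lam * ∏ i, (1 + z i)⁻¹ = lam / (1 + w) ^ d := by
    rw [hprod_inv, h1w, hrd, div_eq_mul_inv]
  -- AM-GM
  have amgm := Real.geom_mean_le_arith_mean_weighted Finset.univ (fun _ : Fin d => (d:ℝ)⁻¹)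
    (fun i => (1 + z i)⁻¹) (fun i _ => inv_nonneg.2 (Nat.cast_nonneg d))
    (by simp [Finset.sum_const, Finset.card_univ]; field_simp)
    (fun i _ => (inv_pos.2 (hg i)).le)
  have hlhs : (∏ i, ((1 + z i)⁻¹) ^ ((d:ℝ)⁻¹)) = r⁻¹ := by
    rw [Real.finset_prod_rpow Finset.univ _ (fun i _ => (inv_pos.2 (hg i)).le), hprod_inv,
      Real.inv_rpow hp.le, hrdef]
  have hrhs : ∑ i : Fin d, (d:ℝ)⁻¹ * (1 + z i)⁻¹ = (d:ℝ)⁻¹ * ∑ i, (1 + z i)⁻¹ := by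
    rw [Finset.mul_sum]
  have hsum_inv : (d:ℝ) * r⁻¹ ≤ ∑ i, (1 + z i)⁻¹ := by
    rw [hlhs, hrhs] at amgm
    calc (d:ℝ) * r⁻¹ ≤ (d:ℝ) * ((d:ℝ)⁻¹ * ∑ i, (1 + z i)⁻¹) :=
          mul_le_mul_of_nonneg_left amgm hdR.le
      _ = ∑ i, (1 + z i)⁻¹ := by field_simp
  have hsum : ∑ i, z i / (1 + z i) ≤ (d:ℝ) * w / (1 + w) := by
    have h1 : ∑ i, z i / (1 + z i) = (d:ℝ) - ∑ i, (1 + z i)⁻¹ := by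
      rw [eq_sub_iff_add_eq, ← Finset.sum_add_distrib]
      have : ∀ i : Fin d, z i / (1 + z i) + (1 + z i)⁻¹ = 1 := by
        intro i
        rw [inv_eq_one_div, ← add_div, add_comm]
        exact div_self (hg i).ne'
      simp [this, Finset.sum_const, Finset.card_univ]
    rw [h1, h1w, hwdef, le_div_iff₀ hr0]
    have hid : (d:ℝ) * r⁻¹ * r = (d:ℝ) := by field_simp
    nlinarith [hsum_inv, hr0]
  -- combine
  have hu_pos : (0:ℝ) < lam * ∏ i, (1 + z i)⁻¹ := by
    rw [hu_eq]; positivity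
  have hfrac_nonneg : (0:ℝ) ≤ (lam * ∏ i, (1 + z i)⁻¹) / (1 + lam * ∏ i, (1 + z i)⁻¹) := by
    positivity
  have step1 : (lam * ∏ i, (1 + z i)⁻¹) / (1 + lam * ∏ i, (1 + z i)⁻¹) * ∑ i, z i / (1 + z i)
      ≤ ((d:ℝ) * w / (1 + w)) * ((lam / (1 + w) ^ d) / (1 + lam / (1 + w) ^ d)) := by
    rw [hu_eq]
    rw [mul_comm ((d:ℝ) * w / (1 + w)) _]
    exact mul_le_mul_of_nonneg_left hsum (by positivity)
  refine le_trans step1 (le_csSup (xi_bdd lam hlam d) ⟨w, hw0, rfl⟩)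

theorem contraction_lemma (lam : ℝ) (hlam : 0 < lam) (d : ℕ) (hd : 0 < d)
    (φ ψ : ℝ → ℝ)
    (hφ : φ = fun t => Real.arsinh (Real.sqrt t))
    (hψ : ψ = fun t => (Real.sinh t) ^ 2)
    (fd : ℝ → ℝ) (hfd : fd = fun x => lam / (1 + x) ^ d)
    (Ξ : ℝ → ℝ) (hΞ : Ξ = fun x => ((d : ℝ) * x / (1 + x)) * (fd x / (1 + fd x)))
    (ξ : ℝ) (hξ : ξ = sSup (Ξ '' Set.Ici 0))
    (fφ : (Fin d → ℝ) → ℝ)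
    (hfφ : fφ = fun x => φ (lam * ∏ i, 1 / (1 + ψ (x i))))
    (x y : Fin d → ℝ)
    (hx : ∀ i, x i ∈ φ '' Set.Ioi 0) (hy : ∀ i, y i ∈ φ '' Set.Ioi 0) :
    |fφ x - fφ y| ^ 2 ≤ ξ * ∑ i, (x i - y i) ^ 2 := by
  subst hfd hΞ hφ hψ hfφ hξ
  simp only [one_div]
  set h : ℝ → ℝ := fun t =>
    Real.arsinh (Real.sqrt (lam * ∏ i, (1 + Real.sinh (y i + t * (x i - y i)) ^ 2)⁻¹)) with hhdef
  set D : ℝ → ℝ := fun t =>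
    -(Real.sqrt ((lam * ∏ i, (1 + Real.sinh (y i + t * (x i - y i)) ^ 2)⁻¹) /
        (1 + lam * ∏ i, (1 + Real.sinh (y i + t * (x i - y i)) ^ 2)⁻¹)) *
      ∑ i, Real.sinh (y i + t * (x i - y i)) * Real.cosh (y i + t * (x i - y i)) /
          (1 + Real.sinh (y i + t * (x i - y i)) ^ 2) * (x i - y i)) with hDdef
  have hD : ∀ t : ℝ, HasDerivAt h (D t) t := fun t =>
    deriv_aux lam hlam d y (fun i => x i - y i) t
  set S : ℝ := ∑ i, (x i - y i) ^ 2 with hSdef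
  have hS0 : (0:ℝ) ≤ S := Finset.sum_nonneg fun i _ => sq_nonneg _
  set ξ' : ℝ := sSup ((fun x => ((d : ℝ) * x / (1 + x)) *
      ((lam / (1 + x) ^ d) / (1 + lam / (1 + x) ^ d))) '' Set.Ici 0) with hxidef
  have hξ0 : (0:ℝ) ≤ ξ' := xi_nonneg lam hlam d
  have bound : ∀ t ∈ Set.Ico (0:ℝ) 1, ‖D t‖ ≤ Real.sqrt ξ' * Real.sqrt S := by
    intro t _
    set c : Fin d → ℝ := fun i => y i + t * (x i - y i) with hcdef
    set T : Fin d → ℝ := fun i =>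
      Real.sinh (c i) * Real.cosh (c i) / (1 + Real.sinh (c i) ^ 2) with hTdef
    have hgpos : ∀ i, (0:ℝ) < 1 + Real.sinh (c i) ^ 2 := fun i => by positivity
    have hu : (0:ℝ) < lam * ∏ i, (1 + Real.sinh (c i) ^ 2)⁻¹ :=
      mul_pos hlam (Finset.prod_pos fun i _ => inv_pos.2 (hgpos i))
    set u : ℝ := lam * ∏ i, (1 + Real.sinh (c i) ^ 2)⁻¹ with hudef
    have habs : ‖D t‖ = Real.sqrt (u / (1 + u)) * |∑ i, T i * (x i - y i)| := by
      rw [hDdef]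
      simp only [Real.norm_eq_abs, abs_neg, abs_mul,
        abs_of_nonneg (Real.sqrt_nonneg _)]
      rfl
    rw [habs]
    have hT2 : ∀ i, T i ^ 2 = Real.sinh (c i) ^ 2 / (1 + Real.sinh (c i) ^ 2) := by
      intro i
      rw [hTdef]
      rw [div_pow, mul_pow, Real.cosh_sq', div_eq_div_iff (by positivity) (hgpos i).ne']
      ring
    have cs := Finset.sum_mul_sq_le_sq_mul_sq Finset.univ T (fun i => x i - y i)
    have habs2 : |∑ i, T i * (x i - y i)| ≤
        Real.sqrt (∑ i, T i ^ 2) * Real.sqrt S := by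
      rw [← Real.sqrt_sq_eq_abs, ← Real.sqrt_mul (Finset.sum_nonneg fun i _ => sq_nonneg _)]
      exact Real.sqrt_le_sqrt cs
    have step : Real.sqrt (u / (1 + u)) * |∑ i, T i * (x i - y i)| ≤
        Real.sqrt (u / (1 + u) * ∑ i, T i ^ 2) * Real.sqrt S := by
      rw [Real.sqrt_mul (by positivity)]
      calc Real.sqrt (u / (1 + u)) * |∑ i, T i * (x i - y i)|
          ≤ Real.sqrt (u / (1 + u)) * (Real.sqrt (∑ i, T i ^ 2) * Real.sqrt S) :=
            mul_le_mul_of_nonneg_left habs2 (Real.sqrt_nonneg _)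
        _ = Real.sqrt (u / (1 + u)) * Real.sqrt (∑ i, T i ^ 2) * Real.sqrt S := by ring
    refine le_trans step ?_
    have key : u / (1 + u) * ∑ i, T i ^ 2 ≤ ξ' := by
      have hA := lemA lam hlam d hd (fun i => Real.sinh (c i) ^ 2) (fun i => sq_nonneg _)
      calc u / (1 + u) * ∑ i, T i ^ 2
          = u / (1 + u) * ∑ i, Real.sinh (c i) ^ 2 / (1 + Real.sinh (c i) ^ 2) := by
            simp only [hT2]
        _ ≤ ξ' := by rw [hudef, hxidef]; exact hA
    exact mul_le_mul_of_nonneg_right (Real.sqrt_le_sqrt key) (Real.sqrt_nonneg _)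
  have mvt := norm_image_sub_le_of_norm_deriv_le_segment'
    (f := h) (f' := D) (a := 0) (b := 1)
    (fun t _ => (hD t).hasDerivWithinAt) bound 1 (by norm_num)
  have e1 : h 1 = Real.arsinh (Real.sqrt (lam * ∏ i, (1 + Real.sinh (x i) ^ 2)⁻¹)) := by
    rw [hhdef]; simp
  have e0 : h 0 = Real.arsinh (Real.sqrt (lam * ∏ i, (1 + Real.sinh (y i) ^ 2)⁻¹)) := by
    rw [hhdef]; simp
  rw [← e1, ← e0]
  calc |h 1 - h 0| ^ 2 ≤ (Real.sqrt ξ' * Real.sqrt S) ^ 2 := by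
        apply pow_le_pow_left₀ (abs_nonneg _)
        simpa using mvt
    _ = ξ' * S := by rw [mul_pow, Real.sq_sqrt hξ0, Real.sq_sqrt hS0]
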